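/- Let f be lower bounded with L_f-Lipschitz gradient and let {x^k} be generated by inexact IHT with L > L_f starting from a K-sparse x^0, with errors satisfying Σ_{k≥0}‖ε^k‖² < ∞. Then any accumulation point x* of {x^k} is an L-stationary point, i.e., x* = H_K(x* - (1/L)∇f(x*)). -/

import Mathlib

open Filter Topology InnerProductSpace intervalIntegral

noncomputable section

lemma descent_lemma {E : Type*} [NormedAddCommGroup E] [InnerProductSpace ℝ E] [CompleteSpace E]
    (f : E → ℝ) (Lf : ℝ) (hf : ContDiff ℝ 1 f)
    (hlip : ∀ x y, ‖gradient f x - gradient f y‖ ≤ Lf * ‖x - y‖) (a b : E) :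
    f b ≤ f a + inner ℝ (gradient f a) (b - a) + Lf / 2 * ‖b - a‖ ^ 2 := by
  set d := b - a with hd
  have hdiff := hf.differentiable one_ne_zero
  have hderiv : ∀ t : ℝ, HasDerivAt (fun t : ℝ => f (a + t • d))
      ((inner ℝ (gradient f (a + t • d)) d : ℝ)) t := by
    intro t
    have h2 : HasDerivAt (fun t : ℝ => a + t • d) d t := by
      simpa using ((hasDerivAt_id t).smul_const d).const_add a
    have h1 : HasFDerivAt f (fderiv ℝ f (a + t • d)) (a + t • d) :=
      (hdiff _).hasFDerivAt
    have h3 := h1.comp_hasDerivAt t h2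
    convert h3 using 1
    exacts [rfl, rfl, rfl, InnerProductSpace.toDual_symm_apply (𝕜 := ℝ) (E := E)]
  have hgradcont : Continuous (gradient f) := by
    show Continuous fun p => (toDual ℝ E).symm (fderiv ℝ f p)
    exact (toDual ℝ E).symm.continuous.comp (hf.continuous_fderiv one_ne_zero)
  have hcont : Continuous fun t : ℝ => (inner ℝ (gradient f (a + t • d)) d : ℝ) := by
    apply Continuous.inner (hgradcont.comp (by continuity)) continuous_const
  have hFTC : (∫ t in (0:ℝ)..1, (inner ℝ (gradient f (a + t • d)) d : ℝ)) = f b - f a := by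
    rw [intervalIntegral.integral_eq_sub_of_hasDerivAt (fun t _ => hderiv t)
      (hcont.intervalIntegrable 0 1)]
    have h10 : a + (1:ℝ) • d = b := by rw [one_smul, hd]; abel
    have h00 : a + (0:ℝ) • d = a := by simp
    rw [h10, h00]
  have hle : (∫ t in (0:ℝ)..1, (inner ℝ (gradient f (a + t • d)) d : ℝ)) ≤
      ∫ t in (0:ℝ)..1, ((inner ℝ (gradient f a) d : ℝ) + (Lf * ‖d‖ ^ 2) * t) := by
    apply intervalIntegral.integral_mono_on (by norm_num) (hcont.intervalIntegrable 0 1)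
      ((continuous_const.add (continuous_mul_left _)).intervalIntegrable 0 1)
    intro t ht
    have h1 : (inner ℝ (gradient f (a + t • d)) d : ℝ) - inner ℝ (gradient f a) d
        = inner ℝ (gradient f (a + t • d) - gradient f a) d := (inner_sub_left _ _ _).symm
    have h2 : (inner ℝ (gradient f (a + t • d) - gradient f a) d : ℝ)
        ≤ ‖gradient f (a + t • d) - gradient f a‖ * ‖d‖ := real_inner_le_norm _ _
    have h3 : ‖gradient f (a + t • d) - gradient f a‖ ≤ Lf * (t * ‖d‖) := by
      have h := hlip (a + t • d) a
      have he : a + t • d - a = t • d := by abel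
      rw [he, norm_smul, Real.norm_eq_abs, abs_of_nonneg ht.1] at h
      exact h
    have h4 : ‖gradient f (a + t • d) - gradient f a‖ * ‖d‖ ≤ Lf * (t * ‖d‖) * ‖d‖ :=
      mul_le_mul_of_nonneg_right h3 (norm_nonneg _)
    simp only [Pi.add_apply]
    nlinarith [norm_nonneg d]
  have hval : (∫ t in (0:ℝ)..1, ((inner ℝ (gradient f a) d : ℝ) + (Lf * ‖d‖ ^ 2) * t))
      = inner ℝ (gradient f a) d + Lf / 2 * ‖d‖ ^ 2 := by
    rw [intervalIntegral.integral_add (intervalIntegrable_const)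
      ((continuous_mul_left _).intervalIntegrable 0 1)]
    rw [intervalIntegral.integral_const, intervalIntegral.integral_const_mul, integral_id]
    norm_num
    ring
  rw [hFTC] at hle
  rw [hval] at hle
  linarith

/-- A vector is `K`-sparse if it has at most `K` nonzero entries. -/
def sparse {N : ℕ} (K : ℕ) (x : EuclideanSpace ℝ (Fin N)) : Prop :=
  (Finset.univ.filter fun i => x i ≠ 0).card ≤ K

/-- `IsHT K z x` means `x` is a result of hard thresholding `z`: a `K`-sparse vector
closest to `z` (ties broken arbitrarily). -/
def IsHT {N : ℕ} (K : ℕ) (z x : EuclideanSpace ℝ (Fin N)) : Prop :=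
  sparse K x ∧ ∀ v : EuclideanSpace ℝ (Fin N), sparse K v → ‖x - z‖ ≤ ‖v - z‖

set_option maxHeartbeats 1000000 in
/-- Any accumulation point of inexact IHT (with `f` lower bounded, `∇f` `L_f`-Lipschitz,
`L > L_f`, square-summable errors) is an `L`-stationary point:
`x* = H_K(x* - (1/L)∇f(x*))`. -/
theorem stmt7 {N : ℕ} (K : ℕ) (f : EuclideanSpace ℝ (Fin N) → ℝ) (Lf L : ℝ)
    (hf : ContDiff ℝ 1 f)
    (hbelow : ∃ B, ∀ y, B ≤ f y)
    (hlip : ∀ x y, ‖gradient f x - gradient f y‖ ≤ Lf * ‖x - y‖)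
    (hL : Lf < L)
    (x ε : ℕ → EuclideanSpace ℝ (Fin N))
    (h0 : sparse K (x 0))
    (hit : ∀ k, IsHT K (x k - (1 / L) • (gradient f (x k) + ε k)) (x (k + 1)))
    (hsum : Summable fun k => ‖ε k‖ ^ 2)
    (xstar : EuclideanSpace ℝ (Fin N))
    (hacc : MapClusterPt xstar Filter.atTop x) :
    IsHT K (xstar - (1 / L) • gradient f xstar) xstar := by
  classical
  -- degenerate case
  by_cases hN : N = 0
  · subst hN
    haveI : Subsingleton (EuclideanSpace ℝ (Fin 0)) :=
      ⟨fun a b => PiLp.ext fun i => i.elim0⟩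
    refine ⟨by simp [sparse], fun v hv => ?_⟩
    exact le_of_eq (congrArg norm (Subsingleton.elim _ _))
  -- nondegenerate
  have hLf : 0 ≤ Lf := by
    have i0 : Fin N := ⟨0, Nat.pos_of_ne_zero hN⟩
    have h := hlip 0 (EuclideanSpace.single i0 1)
    have hn : ‖(0 : EuclideanSpace ℝ (Fin N)) - EuclideanSpace.single i0 1‖ = 1 := by
      rw [zero_sub, norm_neg, EuclideanSpace.norm_single]
      norm_num
    rw [hn, mul_one] at h
    exact le_trans (norm_nonneg _) h
  have hLpos : 0 < L := lt_of_le_of_lt hLf hL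
  set c : ℝ := (L - Lf) / 2 with hcdef
  have hc : 0 < c := by rw [hcdef]; linarith
  have hsp : ∀ k, sparse K (x k) := by
    intro k
    cases k with
    | zero => exact h0
    | succ n => exact (hit n).1
  -- key one-step inequality
  have hkey : ∀ k, f (x (k+1)) + c/2 * ‖x (k+1) - x k‖^2
      ≤ f (x k) + (1/(2*c)) * ‖ε k‖^2 := by
    intro k
    set d := x (k+1) - x k with hd
    set e := ε k with he
    set gk := gradient f (x k) with hgk
    set w := (1/L) • (gk + e) with hw
    have h1 := (hit k).2 (x k) (hsp k)
    have e1 : x (k+1) - (x k - (1/L) • (gradient f (x k) + ε k)) = d + w := by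
      rw [hw, hd, hgk, he]; abel
    have e2 : x k - (x k - (1/L) • (gradient f (x k) + ε k)) = w := by
      rw [hw, hgk, he]; abel
    rw [e1, e2] at h1
    have h2 : ‖d + w‖^2 ≤ ‖w‖^2 := by
      apply pow_le_pow_left₀ (norm_nonneg _) h1
    have h3 : ‖d‖^2 + 2 * inner ℝ d w ≤ 0 := by
      rw [norm_add_sq_real] at h2
      linarith
    have h4 : (inner ℝ d w : ℝ) = (1/L) * (inner ℝ d gk + inner ℝ d e) := by
      rw [hw, real_inner_smul_right, inner_add_right]
    have h5 : (inner ℝ d gk : ℝ) + inner ℝ d e ≤ -(L/2) * ‖d‖^2 := by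
      have hA : (inner ℝ d gk : ℝ) + inner ℝ d e = L * inner ℝ d w := by
        rw [h4]; field_simp
      have hw2 : (inner ℝ d w : ℝ) ≤ -‖d‖^2/2 := by linarith
      calc (inner ℝ d gk : ℝ) + inner ℝ d e = L * inner ℝ d w := hA
        _ ≤ L * (-‖d‖^2/2) := mul_le_mul_of_nonneg_left hw2 hLpos.le
        _ = -(L/2) * ‖d‖^2 := by ring
    have h6 := descent_lemma f Lf hf hlip (x k) (x (k+1))
    rw [← hd, ← hgk] at h6
    have hcomm : (inner ℝ gk d : ℝ) = inner ℝ d gk := real_inner_comm _ _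
    rw [hcomm] at h6
    have hLc : -(L/2)*‖d‖^2 = -(Lf/2)*‖d‖^2 - c*‖d‖^2 := by rw [hcdef]; ring
    have h5' : (inner ℝ d gk : ℝ) + inner ℝ d e ≤ -(Lf/2)*‖d‖^2 - c*‖d‖^2 := by
      rw [← hLc]; exact h5
    have h7 : -(inner ℝ d e : ℝ) ≤ c/2 * ‖d‖^2 + 1/(2*c) * ‖e‖^2 := by
      have h8 := abs_real_inner_le_norm d e
      have h8' : -(inner ℝ d e : ℝ) ≤ ‖d‖ * ‖e‖ := le_trans (neg_le_abs _) h8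
      have h9 : ‖d‖ * ‖e‖ ≤ c/2 * ‖d‖^2 + 1/(2*c) * ‖e‖^2 := by
        have key : 2*c*(‖d‖*‖e‖) ≤ 2*c*(c/2*‖d‖^2 + 1/(2*c)*‖e‖^2) := by
          have expand : 2*c*(c/2*‖d‖^2 + 1/(2*c)*‖e‖^2) = c^2*‖d‖^2 + ‖e‖^2 := by
            field_simp
          rw [expand]
          nlinarith [sq_nonneg (c*‖d‖ - ‖e‖)]
        exact le_of_mul_le_mul_left key (by positivity)
      linarith
    linarith
  -- telescoping
  obtain ⟨B, hB⟩ := hbelow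
  have hpart : ∀ n, ∑ k ∈ Finset.range n, ‖ε k‖^2 ≤ ∑' k, ‖ε k‖^2 :=
    fun n => Summable.sum_le_tsum _ (fun i _ => sq_nonneg _) hsum
  have htele : ∀ n, f (x n) + c/2 * ∑ k ∈ Finset.range n, ‖x (k+1) - x k‖^2
      ≤ f (x 0) + 1/(2*c) * ∑ k ∈ Finset.range n, ‖ε k‖^2 := by
    intro n
    induction n with
    | zero => simp
    | succ n ih =>
      rw [Finset.sum_range_succ, Finset.sum_range_succ, mul_add, mul_add]
      have := hkey n
      linarith
  have hsumd : Summable (fun k => ‖x (k+1) - x k‖^2) := by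
    apply summable_of_sum_range_le (c := (f (x 0) - B + 1/(2*c) * ∑' k, ‖ε k‖^2) / (c/2))
      (fun n => sq_nonneg _)
    intro n
    rw [le_div_iff₀ (by positivity)]
    have h1 := htele n
    have h2 := hB (x n)
    have h3 := hpart n
    have h4 : 1/(2*c) * ∑ k ∈ Finset.range n, ‖ε k‖^2 ≤ 1/(2*c) * ∑' k, ‖ε k‖^2 :=
      mul_le_mul_of_nonneg_left h3 (by positivity)
    nlinarith
  have sq_tendsto : ∀ (u : ℕ → EuclideanSpace ℝ (Fin N)),
      Tendsto (fun k => ‖u k‖^2) atTop (𝓝 0) → Tendsto u atTop (𝓝 0) := by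
    intro u hu
    rw [tendsto_zero_iff_norm_tendsto_zero]
    have h2 : Tendsto (fun k => Real.sqrt (‖u k‖^2)) atTop (𝓝 (Real.sqrt 0)) :=
      (Real.continuous_sqrt.tendsto 0).comp hu
    have h3 : (fun k => Real.sqrt (‖u k‖^2)) = fun k => ‖u k‖ :=
      funext fun k => Real.sqrt_sq (norm_nonneg _)
    rw [h3, Real.sqrt_zero] at h2
    exact h2
  have hd0 : Tendsto (fun k => x (k+1) - x k) atTop (𝓝 0) :=
    sq_tendsto _ hsumd.tendsto_atTop_zero
  have hε0 : Tendsto ε atTop (𝓝 0) := sq_tendsto _ hsum.tendsto_atTop_zero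
  -- subsequence converging to xstar
  obtain ⟨φ, hφ, hxφ⟩ := TopologicalSpace.FirstCountableTopology.tendsto_subseq hacc
  have hx1 : Tendsto (fun k => x (φ k + 1)) atTop (𝓝 xstar) := by
    have h1 : Tendsto (fun k => x (φ k + 1) - x (φ k)) atTop (𝓝 0) :=
      hd0.comp hφ.tendsto_atTop
    have h2 := h1.add hxφ
    rw [zero_add] at h2
    convert h2 using 2 with k
    simp [Function.comp]
  have hgε : Tendsto (fun k => ε (φ k)) atTop (𝓝 0) := hε0.comp hφ.tendsto_atTop
  have hgradcont : Continuous (gradient f) := by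
    show Continuous fun p => (toDual ℝ (EuclideanSpace ℝ (Fin N))).symm (fderiv ℝ f p)
    exact (toDual ℝ _).symm.continuous.comp (hf.continuous_fderiv one_ne_zero)
  have hg : Tendsto (fun k => gradient f (x (φ k))) atTop (𝓝 (gradient f xstar)) :=
    (hgradcont.tendsto _).comp hxφ
  have hz : Tendsto (fun k => x (φ k) - (1/L) • (gradient f (x (φ k)) + ε (φ k)))
      atTop (𝓝 (xstar - (1/L) • gradient f xstar)) := by
    have h1 := hxφ.sub ((hg.add hgε).const_smul (1/L))
    rw [add_zero] at h1
    exact h1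
  constructor
  · -- sparsity of xstar
    have hev : ∀ i ∈ Finset.univ.filter (fun i => xstar i ≠ 0),
        ∀ᶠ k in atTop, x (φ k) i ≠ 0 := by
      intro i hi
      have hi' : xstar i ≠ 0 := (Finset.mem_filter.mp hi).2
      have hti : Tendsto (fun k => x (φ k) i) atTop (𝓝 (xstar i)) := by
        have := ((EuclideanSpace.proj (𝕜 := ℝ) i).continuous.tendsto xstar).comp hxφ
        exact this
      exact hti.eventually_ne hi'
    obtain ⟨k, hk⟩ := (Filter.eventually_all_finset _ |>.mpr hev).exists
    calc (Finset.univ.filter fun i => xstar i ≠ 0).card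
        ≤ (Finset.univ.filter fun i => x (φ k) i ≠ 0).card := by
          apply Finset.card_le_card
          intro i hi
          exact Finset.mem_filter.mpr ⟨Finset.mem_univ _, hk i hi⟩
      _ ≤ K := hsp (φ k)
  · intro v hv
    have hle : ∀ k, ‖x (φ k + 1) - (x (φ k) - (1/L) • (gradient f (x (φ k)) + ε (φ k)))‖
        ≤ ‖v - (x (φ k) - (1/L) • (gradient f (x (φ k)) + ε (φ k)))‖ :=
      fun k => (hit (φ k)).2 v hv
    have hL1 : Tendsto (fun k => ‖x (φ k + 1) -
        (x (φ k) - (1/L) • (gradient f (x (φ k)) + ε (φ k)))‖)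
        atTop (𝓝 ‖xstar - (xstar - (1/L) • gradient f xstar)‖) :=
      (hx1.sub hz).norm
    have hR1 : Tendsto (fun k => ‖v -
        (x (φ k) - (1/L) • (gradient f (x (φ k)) + ε (φ k)))‖)
        atTop (𝓝 ‖v - (xstar - (1/L) • gradient f xstar)‖) :=
      (tendsto_const_nhds.sub hz).norm
    have := le_of_tendsto_of_tendsto' hL1 hR1 hle
    simpa using this
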